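/- Let y ∈ ℝ^n be dominant and let x ∈ ℝ^n. Then r(x) = y if and only if: S_i(x) ≤ S_i(y) for every i ∈ {1,…,n−1} with y_i = y_{i+1}, S_i(x) = S_i(y) for every i ∈ {1,…,n−1} with y_i > y_{i+1}, and S_n(x) = S_n(y). -/

import Mathlib

open Finset

/-- The dominant cone `C = {x ∈ ℝⁿ : x₁ ≥ x₂ ≥ ⋯ ≥ xₙ}`. -/
def domCone (n : ℕ) : Set (EuclideanSpace ℝ (Fin n)) :=
  {x | ∀ i j : Fin n, i ≤ j → x j ≤ x i}

/-- `r` is the map sending each point of `ℝⁿ` to the (unique) closest point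
of the dominant cone. -/
def IsClosestPointMap (n : ℕ)
    (r : EuclideanSpace ℝ (Fin n) → EuclideanSpace ℝ (Fin n)) : Prop :=
  ∀ x, r x ∈ domCone n ∧ ∀ c ∈ domCone n, dist x (r x) ≤ dist x c

/-- `S_k(x) = x₁ + ⋯ + x_k`, the sum of the first `k` coordinates. -/
def psum {n : ℕ} (x : Fin n → ℝ) (k : ℕ) : ℝ :=
  ∑ j ∈ Finset.univ.filter (fun j : Fin n => (j : ℕ) < k), x j

/-- extension of a vector by zero -/
def ext' {n : ℕ} (x : Fin n → ℝ) (j : ℕ) : ℝ := if h : j < n then x ⟨j, h⟩ else 0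

lemma psum_eq {n : ℕ} (x : Fin n → ℝ) {k : ℕ} (hk : k ≤ n) :
    psum x k = ∑ j ∈ range k, ext' x j := by
  rw [psum, Finset.sum_filter]
  have h1 : ∀ i : Fin n, (if (i:ℕ) < k then x i else 0)
      = (fun j : ℕ => if j < k then ext' x j else 0) (i : ℕ) := by
    intro i; simp [ext', i.isLt]
  rw [Finset.sum_congr rfl (fun i _ => h1 i),
    Fin.sum_univ_eq_sum_range (fun j => if j < k then ext' x j else 0) n]
  rw [← Finset.sum_subset (Finset.range_subset_range.mpr hk)
    (by intro j _ hj; simp at hj ⊢; omega)]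
  exact Finset.sum_congr rfl (fun j hj => by simp at hj; simp [hj])

lemma inner_ext {n : ℕ} (a b : EuclideanSpace ℝ (Fin n)) :
    (inner ℝ a b : ℝ) = ∑ j ∈ range n, ext' a j * ext' b j := by
  have : (inner ℝ a b : ℝ) = ∑ i : Fin n, a i * b i := by
    simp [PiLp.inner_apply, RCLike.inner_apply, mul_comm]
  rw [this]
  have h1 : ∀ i : Fin n, a i * b i = (fun j : ℕ => ext' a j * ext' b j) (i : ℕ) := by
    intro i; simp [ext', i.isLt]
  rw [Finset.sum_congr rfl (fun i _ => h1 i),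
    Fin.sum_univ_eq_sum_range (fun j => ext' a j * ext' b j) n]

lemma ext'_sub {n : ℕ} (x y : EuclideanSpace ℝ (Fin n)) (j : ℕ) :
    ext' (x - y) j = ext' x j - ext' y j := by
  unfold ext'; split <;> simp

lemma sum_ext'_sub {n : ℕ} (x y : EuclideanSpace ℝ (Fin n)) {k : ℕ} (hk : k ≤ n) :
    ∑ j ∈ range k, ext' (x - y) j = psum x k - psum y k := by
  rw [psum_eq x hk, psum_eq y hk, ← Finset.sum_sub_distrib]
  exact Finset.sum_congr rfl (fun j _ => ext'_sub x y j)

/-- indicator vector of the first `k` coordinates -/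
def indVec (n k : ℕ) : EuclideanSpace ℝ (Fin n) :=
  WithLp.toLp 2 (fun j : Fin n => if (j : ℕ) < k then 1 else 0)

lemma inner_indVec {n : ℕ} (x y : EuclideanSpace ℝ (Fin n)) {k : ℕ} (hk : k ≤ n) :
    (inner ℝ (x - y) (indVec n k) : ℝ) = psum x k - psum y k := by
  rw [inner_ext, ← sum_ext'_sub x y hk]
  rw [← Finset.sum_subset (Finset.range_subset_range.mpr hk)
    (by intro j hj hj'; simp at hj hj'
        have h0 : ext' (indVec n k) j = 0 := by
          unfold ext' indVec; split <;> simp <;> omega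
        rw [h0, mul_zero])]
  refine Finset.sum_congr rfl (fun j hj => ?_)
  simp at hj
  have hjn : j < n := lt_of_lt_of_le hj hk
  simp [ext', indVec, hjn, hj]

lemma domCone_convex (n : ℕ) : Convex ℝ (domCone n) := by
  intro a ha b hb s t hs ht hst i j hij
  have h1 := ha i j hij
  have h2 := hb i j hij
  simp only [PiLp.add_apply, PiLp.smul_apply, smul_eq_mul]
  nlinarith

lemma mem_test {n : ℕ} {y : EuclideanSpace ℝ (Fin n)} (hy : y ∈ domCone n)
    (k : ℕ) (t : ℝ)
    (h : ∀ i j : Fin n, (i : ℕ) < k → k ≤ (j : ℕ) → y j ≤ y i + t) :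
    y + t • indVec n k ∈ domCone n := by
  intro i j hij
  have h1 := hy i j hij
  simp only [PiLp.add_apply, PiLp.smul_apply, smul_eq_mul, indVec, WithLp.ofLp_toLp]
  have hij' : (i : ℕ) ≤ (j : ℕ) := hij
  by_cases hik : (i : ℕ) < k <;> by_cases hjk : (j : ℕ) < k
  · simp [hik, hjk]; linarith
  · simp [hik, hjk]
    have := h i j hik (by omega)
    linarith
  · omega
  · simp [hik, hjk]; exact h1

lemma min_iff {n : ℕ} {K : Set (EuclideanSpace ℝ (Fin n))} (hK : Convex ℝ K)
    {v : EuclideanSpace ℝ (Fin n)} (hv : v ∈ K) (x : EuclideanSpace ℝ (Fin n)) :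
    (∀ w ∈ K, dist x v ≤ dist x w) ↔ ∀ w ∈ K, (inner ℝ (x - v) (w - v) : ℝ) ≤ 0 := by
  rw [← norm_eq_iInf_iff_real_inner_le_zero hK hv]
  haveI : Nonempty K := ⟨⟨v, hv⟩⟩
  have hbdd : BddBelow (Set.range fun w : K => ‖x - (w : EuclideanSpace ℝ (Fin n))‖) :=
    ⟨0, fun _ ⟨_, h⟩ => h ▸ norm_nonneg _⟩
  constructor
  · intro h
    apply le_antisymm
    · apply le_ciInf; rintro ⟨w, hw⟩
      simpa [dist_eq_norm] using h w hw
    · exact ciInf_le hbdd ⟨v, hv⟩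
  · intro h w hw
    rw [dist_eq_norm, dist_eq_norm, h]
    exact ciInf_le hbdd ⟨w, hw⟩

theorem stmt_2 (n : ℕ) (hn : 1 ≤ n)
    (r : EuclideanSpace ℝ (Fin n) → EuclideanSpace ℝ (Fin n))
    (hr : IsClosestPointMap n r)
    (y : EuclideanSpace ℝ (Fin n)) (hy : y ∈ domCone n)
    (x : EuclideanSpace ℝ (Fin n)) :
    r x = y ↔
      ((∀ i : ℕ, ∀ h1 : 1 ≤ i, ∀ h2 : i < n,
          y ⟨i - 1, by omega⟩ = y ⟨i, h2⟩ → psum x i ≤ psum y i) ∧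
       (∀ i : ℕ, ∀ h1 : 1 ≤ i, ∀ h2 : i < n,
          y ⟨i, h2⟩ < y ⟨i - 1, by omega⟩ → psum x i = psum y i) ∧
       psum x n = psum y n) := by
  -- VI applied with specific test vectors
  have key_test : (∀ c ∈ domCone n, (inner ℝ (x - y) (c - y) : ℝ) ≤ 0) →
      ∀ k : ℕ, k ≤ n → ∀ t : ℝ,
      (∀ i j : Fin n, (i : ℕ) < k → k ≤ (j : ℕ) → y j ≤ y i + t) →
      t * (psum x k - psum y k) ≤ 0 := by
    intro hVI k hk t h
    have hmem := mem_test hy k t h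
    have := hVI _ hmem
    have he : y + t • indVec n k - y = t • indVec n k := by abel
    rw [he, real_inner_smul_right, inner_indVec x y hk] at this
    exact this
  constructor
  · intro hrx
    have hVI : ∀ c ∈ domCone n, (inner ℝ (x - y) (c - y) : ℝ) ≤ 0 := by
      rw [← min_iff (domCone_convex n) hy x]
      intro w hw
      rw [← hrx]
      exact (hr x).2 w hw
    -- S_k ≤ 0 for every k ≤ n
    have hle : ∀ k : ℕ, k ≤ n → psum x k ≤ psum y k := by
      intro k hk
      have := key_test hVI k hk 1 (fun i j _ _ => by linarith [hy i j (by omega : i ≤ j)])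
      linarith
    -- S_n ≥ 0
    have hge_n : psum y n ≤ psum x n := by
      have := key_test hVI n le_rfl (-1) (fun i j _ hj => absurd j.isLt (by omega))
      linarith
    refine ⟨fun i h1 h2 _ => hle i (le_of_lt h2), ?_, le_antisymm (hle n le_rfl) hge_n⟩
    intro i h1 h2 hlt
    have ht : (y ⟨i, h2⟩ - y ⟨i - 1, by omega⟩ : ℝ) < 0 := by linarith
    have := key_test hVI i (le_of_lt h2) (y ⟨i, h2⟩ - y ⟨i - 1, by omega⟩) ?_
    · have h' := hle i (le_of_lt h2)
      nlinarith
    · intro a b ha hb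
      have h3 : y b ≤ y ⟨i, h2⟩ := hy ⟨i, h2⟩ b (by simpa [Fin.le_def] using hb)
      have h4 : y ⟨i - 1, by omega⟩ ≤ y a := hy a ⟨i - 1, by omega⟩ (by simp [Fin.le_def]; omega)
      linarith
  · rintro ⟨hc1, hc2, hc3⟩
    -- first show y satisfies the variational inequality
    have hVI : ∀ c ∈ domCone n, (inner ℝ (x - y) (c - y) : ℝ) ≤ 0 := by
      intro c hc
      rw [inner_ext]
      have habel := Finset.sum_range_by_parts (fun j => ext' (c - y) j)
        (fun j => ext' (x - y) j) n
      simp only [smul_eq_mul] at habel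
      rw [Finset.sum_congr rfl (fun j _ => mul_comm (ext' (x - y) j) (ext' (c - y) j)), habel]
      have hSn : ∑ j ∈ range n, ext' (x - y) j = 0 := by
        rw [sum_ext'_sub x y le_rfl]; linarith
      rw [hSn, mul_zero, zero_sub, neg_nonpos]
      apply Finset.sum_nonneg
      intro i hi
      simp only [Finset.mem_range] at hi
      have hi1 : i + 1 < n := by omega
      have hin : i < n := by omega
      have hS : ∑ j ∈ range (i + 1), ext' (x - y) j = psum x (i + 1) - psum y (i + 1) :=
        sum_ext'_sub x y (by omega)
      have hylt := hy ⟨i, hin⟩ ⟨i + 1, hi1⟩ (by simp [Fin.le_def])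
      rcases lt_or_eq_of_le hylt with hlt | heq
      · -- strict decrease: partial sum difference is 0
        have h0 : psum x (i + 1) = psum y (i + 1) := by
          have := hc2 (i + 1) (by omega) hi1
          simp only [Nat.add_sub_cancel] at this
          exact this hlt
        rw [hS, h0, sub_self, mul_zero]
      · -- equality: partial sum difference ≤ 0, coefficient ≤ 0
        have h0 : psum x (i + 1) ≤ psum y (i + 1) := by
          have := hc1 (i + 1) (by omega) hi1
          simp only [Nat.add_sub_cancel] at this
          exact this heq.symm
        have hcoef : ext' (c - y) (i + 1) - ext' (c - y) i ≤ 0 := by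
          rw [ext'_sub, ext'_sub]
          simp only [ext', hi1, hin, dif_pos]
          have hcle := hc ⟨i, hin⟩ ⟨i + 1, hi1⟩ (by simp [Fin.le_def])
          rw [← heq]
          linarith
        rw [hS]
        nlinarith
    -- now conclude r x = y
    have h1 : dist x (r x) ≤ dist x y := (hr x).2 y hy
    have h2 : (inner ℝ (x - y) (r x - y) : ℝ) ≤ 0 := hVI (r x) (hr x).1
    have he : x - r x = (x - y) - (r x - y) := by abel
    have hnorm : ‖x - r x‖ ^ 2 = ‖x - y‖ ^ 2 - 2 * (inner ℝ (x - y) (r x - y) : ℝ)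
        + ‖r x - y‖ ^ 2 := by
      rw [he, @norm_sub_sq_real]
    rw [dist_eq_norm, dist_eq_norm] at h1
    have h3 : ‖x - r x‖ ^ 2 ≤ ‖x - y‖ ^ 2 := by
      apply pow_le_pow_left₀ (norm_nonneg _) h1
    have h4 : ‖r x - y‖ ^ 2 ≤ 0 := by nlinarith
    have h5 : ‖r x - y‖ = 0 := by
      nlinarith [norm_nonneg (r x - y)]
    rw [norm_eq_zero, sub_eq_zero] at h5
    exact h5
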